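/- Every permutation polynomial f of the finite field F_q can be represented by a polynomial of the form P_n(x) = (⋯((a_0 x + a_1)^{q−2} + a_2)^{q−2} ⋯ + a_n)^{q−2} + a_{n+1}, with a_1, a_{n+1} ∈ F_q and a_0, a_2, …, a_n ∈ F_q*; that is, there exist such n and coefficients with f(x) ≡ P_n(x) (mod x^q − x). Equivalently, the group of permutations of F_q is generated by the maps x ↦ ax + b (a ≠ 0) together with x ↦ x^{q−2}. -/

import Mathlib

open Polynomial

noncomputable def carlitzChain {F : Type*} [Field F] (q : ℕ) (a : ℕ → F) : ℕ → F[X]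
  | 0 => C (a 0) * X + C (a 1)
  | n + 1 => carlitzChain q a n ^ (q - 2) + C (a (n + 2))

/-- `f` is congruent mod `X^q - X` to a Carlitz chain of length `n`. -/
def IsCarlitzRep {F : Type*} [Field F] (q : ℕ) (f : F[X]) (n : ℕ) : Prop :=
  ∃ a : ℕ → F, a 0 ≠ 0 ∧ (∀ i, 2 ≤ i → i ≤ n → a i ≠ 0) ∧
    (X ^ q - X : F[X]) ∣ f - carlitzChain q a n

/-- The Carlitz rank of a permutation polynomial. -/
noncomputable def carlitzRank {F : Type*} [Field F] (q : ℕ) (f : F[X]) : ℕ :=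
  sInf {n | IsCarlitzRep q f n}

/-- The weight: number of nonzero coefficients of the reduction of `f` mod `X^q - X`. -/
noncomputable def polyWeight {F : Type*} [Field F] (q : ℕ) (f : F[X]) : ℕ :=
  (f %ₘ (X ^ q - X)).support.card

/-- `ν_p` from the paper. -/
noncomputable def nuP (p : ℕ) [Fact p.Prime] : ℕ :=
  Finset.sup (Finset.univ.erase (1 : ZMod p)) fun γ =>
    ((Finset.Icc 1 (p - 2)).filter
      (fun i : ℕ => γ ^ (i + 1) = (i : ZMod p) * (1 - γ) + 1)).card

section CarlitzAux

variable {F : Type*} [Field F]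

private lemma chain_eval_zero (m : ℕ) (a : ℕ → F) (x : F) :
    (carlitzChain m a 0).eval x = a 0 * x + a 1 := by
  simp [carlitzChain]

private lemma chain_eval_succ (m : ℕ) (a : ℕ → F) (n : ℕ) (x : F) :
    (carlitzChain m a (n + 1)).eval x
      = ((carlitzChain m a n).eval x) ^ (m - 2) + a (n + 2) := by
  simp [carlitzChain]

private lemma carlitzChain_congr (m : ℕ) (a b : ℕ → F) :
    ∀ n, (∀ i, i ≤ n + 1 → a i = b i) → carlitzChain m a n = carlitzChain m b n := by
  intro n
  induction n with
  | zero => intro h; simp [carlitzChain, h 0 (by omega), h 1 (by omega)]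
  | succ k ih =>
      intro h
      have h1 : carlitzChain m a k = carlitzChain m b k := ih fun i hi => h i (by omega)
      simp [carlitzChain, h1, h (k + 2) (by omega)]

/-- the function `g` is representable by some Carlitz chain -/
private def ChainRep (m : ℕ) (g : F → F) : Prop :=
  ∃ n, ∃ a : ℕ → F, a 0 ≠ 0 ∧ (∀ i, 2 ≤ i → i ≤ n → a i ≠ 0) ∧
    ∀ x, (carlitzChain m a n).eval x = g x

variable {m : ℕ} (h0 : (0 : F) ^ (m - 2) = 0) (hinv : ∀ x : F, x ≠ 0 → x ^ (m - 2) = x⁻¹)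

include h0 hinv

private lemma mul_pow_m2 {α : F} (c : F) (hα : α ≠ 0) :
    α * c ^ (m - 2) = (α⁻¹ * c) ^ (m - 2) := by
  by_cases hc : c = 0
  · simp [hc, h0]
  · rw [hinv c hc, hinv _ (mul_ne_zero (inv_ne_zero hα) hc), mul_inv, inv_inv]

private lemma pow_m2_pow_m2 (c : F) : (c ^ (m - 2)) ^ (m - 2) = c := by
  by_cases hc : c = 0
  · simp [hc, h0]
  · rw [hinv c hc, hinv _ (inv_ne_zero hc), inv_inv]

private lemma rep_affine_aux :
    ∀ (n : ℕ) (a : ℕ → F) (α β : F), α ≠ 0 →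
      ∃ b : ℕ → F, (a 0 ≠ 0 → b 0 ≠ 0) ∧ (∀ i, 2 ≤ i → i ≤ n → a i ≠ 0 → b i ≠ 0) ∧
        b (n + 1) = α * a (n + 1) + β ∧
        ∀ x, (carlitzChain m b n).eval x = α * (carlitzChain m a n).eval x + β := by
  intro n
  induction n with
  | zero =>
      intro a α β hα
      refine ⟨fun i => if i = 0 then α * a 0 else α * a i + β, ?_, by omega, by simp, ?_⟩
      · intro ha; simpa using mul_ne_zero hα ha
      · intro x; rw [chain_eval_zero, chain_eval_zero]; simp; ring
  | succ k ih =>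
      intro a α β hα
      obtain ⟨b, hb0, hbcon, hbtop, hbeval⟩ := ih a α⁻¹ 0 (inv_ne_zero hα)
      refine ⟨Function.update b (k + 2) (α * a (k + 2) + β), ?_, ?_, ?_, ?_⟩
      · intro ha; rw [Function.update_of_ne (by omega)]; exact hb0 ha
      · intro i h2 hk ha
        rw [Function.update_of_ne (by omega)]
        rcases Nat.lt_or_ge i (k + 1) with h | h
        · exact hbcon i h2 (by omega) ha
        · have hik : i = k + 1 := by omega
          subst hik
          rw [hbtop, add_zero]
          exact mul_ne_zero (inv_ne_zero hα) ha
      · rw [Function.update_self]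
      · intro x
        have hcc : carlitzChain m (Function.update b (k + 2) (α * a (k + 2) + β)) k
            = carlitzChain m b k :=
          carlitzChain_congr m _ _ k fun i hi => Function.update_of_ne (by omega) _ _
        rw [chain_eval_succ, chain_eval_succ, hcc, Function.update_self, hbeval x, add_zero,
          ← mul_pow_m2 h0 hinv _ hα]
        ring

private lemma rep_affine {g : F → F} (hg : ChainRep m g) (α β : F) (hα : α ≠ 0) :
    ChainRep m fun x => α * g x + β := by
  obtain ⟨n, a, ha0, hcon, heval⟩ := hg
  obtain ⟨b, hb0, hbcon, _, hbeval⟩ := rep_affine_aux h0 hinv n a α β hα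
  exact ⟨n, b, hb0 ha0, fun i h2 hn => hbcon i h2 hn (hcon i h2 hn),
    fun x => by rw [hbeval x, heval x]⟩

private lemma rep_inv {g : F → F} (hg : ChainRep m g) : ChainRep m fun x => (g x) ^ (m - 2) := by
  obtain ⟨n, a, ha0, hcon, heval⟩ := hg
  rcases n with _ | k
  · refine ⟨1, Function.update a 2 0, ?_, by omega, ?_⟩
    · rwa [Function.update_of_ne (by omega)]
    · intro x
      have hcc : carlitzChain m (Function.update a 2 0) 0 = carlitzChain m a 0 :=
        carlitzChain_congr m _ _ 0 fun i hi => Function.update_of_ne (by omega) _ _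
      rw [chain_eval_succ, hcc, Function.update_self, heval x, add_zero]
  · by_cases hz : a (k + 2) = 0
    · refine ⟨k, a, ha0, fun i h2 hk => hcon i h2 (by omega), fun x => ?_⟩
      show (carlitzChain m a k).eval x = g x ^ (m - 2)
      rw [← heval x, chain_eval_succ, hz, add_zero, pow_m2_pow_m2 h0 hinv]
    · refine ⟨k + 2, Function.update a (k + 3) 0,
        by rw [Function.update_of_ne (by omega)]; exact ha0, ?_, ?_⟩
      · intro i h2 hk
        rw [Function.update_of_ne (by omega)]
        rcases Nat.lt_or_ge i (k + 2) with h | h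
        · exact hcon i h2 (by omega)
        · have : i = k + 2 := by omega
          subst this; exact hz
      · intro x
        have hcc : carlitzChain m (Function.update a (k + 3) 0) (k + 1)
            = carlitzChain m a (k + 1) :=
          carlitzChain_congr m _ _ (k + 1) fun i hi => Function.update_of_ne (by omega) _ _
        rw [chain_eval_succ, hcc, Function.update_self, heval x, add_zero]

omit h0 hinv in
private lemma rep_id : ChainRep (F := F) m id := by
  refine ⟨0, fun i => if i = 0 then 1 else 0, by simp, by omega, fun x => ?_⟩
  rw [chain_eval_zero]; simp

private lemma swap01_formula [DecidableEq F] (y : F) :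
    -1 * (-1 * (-1 * y ^ (m - 2) + 1) ^ (m - 2) + 1) ^ (m - 2) + 1
      = Equiv.swap (0 : F) 1 y := by
  by_cases hy0 : y = 0
  · subst hy0
    rw [Equiv.swap_apply_left, h0]
    norm_num [h0]
  by_cases hy1 : y = 1
  · subst hy1
    rw [Equiv.swap_apply_right]
    norm_num [h0]
  rw [Equiv.swap_apply_of_ne_of_ne hy0 hy1]
  rw [hinv y hy0]
  have k1 : -1 * y⁻¹ + 1 ≠ 0 := by
    intro h
    apply hy1
    have h' : y⁻¹ = 1 := by linear_combination -h
    exact inv_eq_one.mp h'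
  rw [hinv _ k1]
  have k2 : -1 * (-1 * y⁻¹ + 1)⁻¹ + 1 ≠ 0 := by
    intro h
    have h1 : (-1 * y⁻¹ + 1)⁻¹ = 1 := by linear_combination -h
    have h2 : -1 * y⁻¹ + 1 = 1 := inv_eq_one.mp h1
    have h3 : y⁻¹ = 0 := by linear_combination -h2
    exact hy0 (inv_eq_zero.mp h3)
  rw [hinv _ k2]
  have hy1' : -1 + y ≠ 0 := fun h => hy1 (by linear_combination h)
  field_simp
  ring

omit h0 hinv in
private lemma swap_conj [DecidableEq F] (γ δ : F) (hd : δ - γ ≠ 0) (y : F) :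
    (δ - γ) * Equiv.swap (0 : F) 1 ((δ - γ)⁻¹ * y + -((δ - γ)⁻¹ * γ)) + γ
      = Equiv.swap γ δ y := by
  by_cases h1 : y = γ
  · rw [h1]
    have e0 : (δ - γ)⁻¹ * γ + -((δ - γ)⁻¹ * γ) = 0 := by ring
    rw [e0, Equiv.swap_apply_left, Equiv.swap_apply_left]
    ring
  by_cases h2 : y = δ
  · rw [h2]
    have e1 : (δ - γ)⁻¹ * δ + -((δ - γ)⁻¹ * γ) = 1 := by
      linear_combination inv_mul_cancel₀ hd
    rw [e1, Equiv.swap_apply_right, Equiv.swap_apply_right]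
    ring
  · rw [Equiv.swap_apply_of_ne_of_ne h1 h2]
    have hne0 : (δ - γ)⁻¹ * y + -((δ - γ)⁻¹ * γ) ≠ 0 := by
      intro h
      apply h1
      have h' : (δ - γ)⁻¹ * y = (δ - γ)⁻¹ * γ := by linear_combination h
      exact mul_left_cancel₀ (inv_ne_zero hd) h'
    have hne1 : (δ - γ)⁻¹ * y + -((δ - γ)⁻¹ * γ) ≠ 1 := by
      intro h
      apply h2
      have h' : (δ - γ)⁻¹ * (y - γ) = 1 := by linear_combination h
      have h'' : y - γ = δ - γ := by
        linear_combination (δ - γ) * h' + (γ - y) * mul_inv_cancel₀ hd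
      linear_combination h''
    rw [Equiv.swap_apply_of_ne_of_ne hne0 hne1]
    linear_combination (y - γ) * mul_inv_cancel₀ hd

private lemma rep_swap01 [DecidableEq F] {g : F → F} (hg : ChainRep m g) :
    ChainRep m fun x => Equiv.swap (0 : F) 1 (g x) := by
  have s1 := rep_inv h0 hinv hg
  have s2 := rep_affine h0 hinv s1 (-1) 1 (by norm_num)
  have s3 := rep_inv h0 hinv s2
  have s4 := rep_affine h0 hinv s3 (-1) 1 (by norm_num)
  have s5 := rep_inv h0 hinv s4
  have s6 := rep_affine h0 hinv s5 (-1) 1 (by norm_num)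
  convert s6 using 1
  funext x
  exact (swap01_formula h0 hinv (g x)).symm

private lemma rep_swap [DecidableEq F] (γ δ : F) {g : F → F} (hg : ChainRep m g) :
    ChainRep m fun x => Equiv.swap γ δ (g x) := by
  by_cases hgd : γ = δ
  · subst hgd; simpa [Equiv.swap_self] using hg
  have hd : δ - γ ≠ 0 := sub_ne_zero.mpr (Ne.symm hgd)
  have s1 := rep_affine h0 hinv hg (δ - γ)⁻¹ (-((δ - γ)⁻¹ * γ)) (inv_ne_zero hd)
  have s2 := rep_swap01 h0 hinv s1
  have s3 := rep_affine h0 hinv s2 (δ - γ) γ hd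
  convert s3 using 1
  funext x
  exact (swap_conj γ δ hd (g x)).symm

private lemma rep_perm [Finite F] (σ : Equiv.Perm F) : ChainRep m ⇑σ := by
  classical
  refine Equiv.Perm.swap_induction_on σ ?_ fun f x y hxy ih => ?_
  · simpa using rep_id (F := F) (m := m)
  · have := rep_swap h0 hinv x y ih
    simpa [Function.comp_def] using this

end CarlitzAux

/-- **(Carlitz.)** Every permutation polynomial `f` of the finite field `F_q` is congruent
mod `x^q - x` to some `P_n(x) = (⋯((a₀x + a₁)^{q-2} + a₂)^{q-2} ⋯ + a_n)^{q-2} + a_{n+1}`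
with `a₁, a_{n+1} ∈ F_q` and `a₀, a₂, …, a_n ∈ F_q*`. -/
theorem exists_carlitz_representation {F : Type*} [Field F] [Fintype F] (f : F[X])
    (hperm : Function.Bijective fun x : F => f.eval x) :
    ∃ n : ℕ, IsCarlitzRep (Fintype.card F) f n := by
  classical
  set m := Fintype.card F with hm
  have hm2 : 1 < m := Fintype.one_lt_card
  have hrep : ChainRep m fun x : F => f.eval x := by
    rcases eq_or_lt_of_le (show 2 ≤ m from hm2) with h2 | h3
    · -- m = 2
      have two : ∀ x : F, x = 0 ∨ x = 1 := by
        intro x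
        have hx : x ^ m = x := FiniteField.pow_card x
        rw [← h2] at hx
        have hxx : x * (x - 1) = 0 := by linear_combination hx
        rcases mul_eq_zero.mp hxx with h | h
        · exact Or.inl h
        · exact Or.inr (by linear_combination h)
      refine ⟨0, fun i => if i = 0 then 1 else f.eval 0, by simp, by omega, fun x => ?_⟩
      rw [chain_eval_zero]
      show (1 : F) * x + f.eval 0 = f.eval x
      rw [one_mul]
      rcases two x with h | h
      · subst h; simp
      · subst h
        have hne : f.eval 1 ≠ f.eval 0 := fun h => one_ne_zero (hperm.injective h)
        rcases two (f.eval 1 - f.eval 0) with h | h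
        · exact absurd (sub_eq_zero.mp h) hne
        · linear_combination -h
    · -- 3 ≤ m
      have h0 : (0 : F) ^ (m - 2) = 0 := zero_pow (by omega)
      have hinv : ∀ x : F, x ≠ 0 → x ^ (m - 2) = x⁻¹ := by
        intro x hx
        have h1 : x ^ (m - 1) = 1 := FiniteField.pow_card_sub_one_eq_one x hx
        have h2 : x ^ (m - 2) * x = 1 := by
          rw [← pow_succ]
          have : m - 2 + 1 = m - 1 := by omega
          rw [this, h1]
        exact eq_inv_of_mul_eq_one_left h2
      exact rep_perm h0 hinv (Equiv.ofBijective _ hperm)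
  obtain ⟨n, a, ha0, hcon, heval⟩ := hrep
  refine ⟨n, a, ha0, hcon, ?_⟩
  have hmonic : (X ^ m - X : F[X]).Monic :=
    monic_X_pow_sub (by rw [degree_X]; exact_mod_cast hm2)
  set p : F[X] := f - carlitzChain m a n with hp
  have hz : ∀ x : F, p.eval x = 0 := by
    intro x
    rw [hp]
    simp [heval x]
  have hr : ∀ x : F, (p %ₘ (X ^ m - X)).eval x = 0 := by
    intro x
    rw [Polynomial.modByMonic_eq_sub_mul_div p (X ^ m - X)]
    have hxm : x ^ m = x := by rw [hm]; exact FiniteField.pow_card x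
    simp [hxm, hz x]
  have hzero : p %ₘ (X ^ m - X) = 0 := by
    by_cases h0p : p %ₘ (X ^ m - X) = 0
    · exact h0p
    · refine Polynomial.eq_zero_of_natDegree_lt_card_of_eval_eq_zero _
        Function.injective_id hr ?_
      have hdeg : (X ^ m - X : F[X]).degree = m := by
        rw [degree_sub_eq_left_of_degree_lt, degree_X_pow]
        rw [degree_X_pow, degree_X]
        exact_mod_cast hm2
      have hlt := Polynomial.degree_modByMonic_lt p hmonic
      rw [hdeg] at hlt
      exact (Polynomial.natDegree_lt_iff_degree_lt h0p).mpr hlt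
  exact (Polynomial.modByMonic_eq_zero_iff_dvd hmonic).mp hzero
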